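/- If S ∈ ℝ^{s×s} satisfies ‖S‖_∞ < 1/2, then for every diagonal sign matrix Σ with entries in {-1,1}, the matrix (I - SΣ)^{-1} is strictly diagonally dominant with positive diagonal entries. -/
import Mathlib

/-- The induced `∞`-norm (maximal absolute row sum) of a real matrix. -/
noncomputable def linfNorm {m n : ℕ} (A : Matrix (Fin m) (Fin n) ℝ) : ℝ :=
  ⨆ i : Fin m, ∑ j : Fin n, |A i j|

/-- If `‖S‖_∞ < 1/2` then for every diagonal sign matrix `Σ` with entries in
`{-1,1}` the inverse `(I - SΣ)⁻¹` is strictly diagonally dominant with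
positive diagonal entries. -/
theorem inv_one_sub_sign_strictly_diagonally_dominant
    (s : ℕ) (S : Matrix (Fin s) (Fin s) ℝ)
    (hS : linfNorm S < 1 / 2)
    (σ : Fin s → ℝ) (hσ : ∀ i, σ i = 1 ∨ σ i = -1) :
    IsUnit (1 - S * Matrix.diagonal σ) ∧
      ∀ i : Fin s,
        0 < (1 - S * Matrix.diagonal σ)⁻¹ i i ∧
        ∑ j ∈ Finset.univ.erase i, |(1 - S * Matrix.diagonal σ)⁻¹ i j| <
          |(1 - S * Matrix.diagonal σ)⁻¹ i i| := by
  set t : ℝ := linfNorm S with ht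
  set T : Matrix (Fin s) (Fin s) ℝ := S * Matrix.diagonal σ with hTdef
  have habs : ∀ i j, |T i j| = |S i j| := by
    intro i j
    rw [hTdef, Matrix.mul_diagonal, abs_mul]
    rcases hσ j with h | h <;> simp [h]
  have ht0 : 0 ≤ t := by
    apply Real.iSup_nonneg
    intro i
    exact Finset.sum_nonneg fun j _ => abs_nonneg _
  have hrow : ∀ m : Fin s, ∑ j, |T m j| ≤ t := by
    intro m
    simp_rw [habs, ht, linfNorm]
    exact le_ciSup (f := fun i => ∑ j, |S i j|) (Set.Finite.bddAbove (Set.finite_range _)) m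
  -- determinant nonzero via Gershgorin
  have hdet : (1 - T).det ≠ 0 := by
    apply det_ne_zero_of_sum_row_lt_diag
    intro k
    have h1 : ∑ j ∈ Finset.univ.erase k, ‖(1 - T) k j‖ = ∑ j ∈ Finset.univ.erase k, |T k j| := by
      apply Finset.sum_congr rfl
      intro j hj
      have hjk : j ≠ k := Finset.ne_of_mem_erase hj
      simp [Matrix.sub_apply, Matrix.one_apply_ne' hjk, Real.norm_eq_abs]
    have h2 : ∑ j ∈ Finset.univ.erase k, |T k j| + |T k k| = ∑ j, |T k j| := by
      rw [Finset.sum_erase_add _ _ (Finset.mem_univ k)]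
    have h3 : ∑ j, |T k j| ≤ t := hrow k
    have h4 : ‖(1 - T) k k‖ = |1 - T k k| := by
      simp [Matrix.sub_apply, Matrix.one_apply_eq, Real.norm_eq_abs]
    rw [h1, h4]
    have h5 : 1 - |T k k| ≤ |1 - T k k| := by
      have := abs_sub_abs_le_abs_sub (1 : ℝ) (T k k)
      simpa using this
    have h6 : |T k k| ≤ ∑ j, |T k j| :=
      Finset.single_le_sum (f := fun j => |T k j|) (fun j _ => abs_nonneg _) (Finset.mem_univ k)
    linarith
  have hU : IsUnit (1 - T) := (Matrix.isUnit_iff_isUnit_det _).2 (isUnit_iff_ne_zero.2 hdet)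
  set B : Matrix (Fin s) (Fin s) ℝ := (1 - T)⁻¹ with hBdef
  have hBmul : B * (1 - T) = 1 := Matrix.nonsing_inv_mul _ (isUnit_iff_ne_zero.2 hdet)
  have hB1 : B = 1 + B * T := by
    have h : B - B * T = 1 := by rw [← hBmul, Matrix.mul_sub, Matrix.mul_one]
    rw [← h]; abel
  have hentry : ∀ i j, B i j = (if i = j then (1:ℝ) else 0) + (B * T) i j := by
    intro i j
    conv_lhs => rw [hB1]
    simp [Matrix.add_apply, Matrix.one_apply]
  refine ⟨hU, ?_⟩
  intro i
  set c : ℝ := ∑ j, |(B * T) i j| with hc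
  have hc0 : 0 ≤ c := Finset.sum_nonneg fun j _ => abs_nonneg _
  set r : ℝ := ∑ k, |B i k| with hr
  have hcr : c ≤ r * t := by
    calc c ≤ ∑ j, ∑ m, |B i m| * |T m j| := by
            apply Finset.sum_le_sum
            intro j _
            rw [Matrix.mul_apply]
            refine (Finset.abs_sum_le_sum_abs _ _).trans (le_of_eq ?_)
            simp [abs_mul]
      _ = ∑ m, |B i m| * ∑ j, |T m j| := by
            rw [Finset.sum_comm]
            simp [Finset.mul_sum]
      _ ≤ ∑ m, |B i m| * t := by
            apply Finset.sum_le_sum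
            intro m _
            exact mul_le_mul_of_nonneg_left (hrow m) (abs_nonneg _)
      _ = r * t := by rw [hr, Finset.sum_mul]
  have hrc : r ≤ 1 + c := by
    calc r ≤ ∑ k, (|if i = k then (1:ℝ) else 0| + |(B * T) i k|) := by
            apply Finset.sum_le_sum
            intro k _
            rw [hentry i k]
            exact abs_add_le _ _
      _ = 1 + c := by
            rw [Finset.sum_add_distrib, ← hc]
            have h7 : ∑ k : Fin s, |if i = k then (1:ℝ) else 0| = 1 := by
              simp [apply_ite abs]
            rw [h7]
  have hc1 : c < 1 := by nlinarith
  have hdiag : |(B * T) i i| ≤ c :=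
    Finset.single_le_sum (f := fun j => |(B * T) i j|) (fun j _ => abs_nonneg _) (Finset.mem_univ i)
  have hBii : B i i = 1 + (B * T) i i := by rw [hentry i i, if_pos rfl]
  have hpos : 0 < B i i := by
    rw [hBii]
    have := abs_le.1 hdiag
    linarith [this.1]
  constructor
  · exact hpos
  · have hoff : ∑ j ∈ Finset.univ.erase i, |B i j| = ∑ j ∈ Finset.univ.erase i, |(B * T) i j| := by
      apply Finset.sum_congr rfl
      intro j hj
      have hij : i ≠ j := (Finset.ne_of_mem_erase hj).symm
      rw [hentry i j, if_neg hij, zero_add]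
    have hsum : ∑ j ∈ Finset.univ.erase i, |(B * T) i j| + |(B * T) i i| = c := by
      rw [hc, Finset.sum_erase_add _ _ (Finset.mem_univ i)]
    rw [hoff, abs_of_pos hpos, hBii]
    linarith [neg_abs_le ((B * T) i i)]
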